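/- Let λ ∈ ℝ and ε ∈ {+1, −1}, and with f(r) = 1 − √(2r) define the Dirac effective potential V_ε(r) = f(r)λ²/r² + ελ·f(r)·(d/dr)(√(f(r))/r) for 0 < r < 1/2. Then r²·V_ε(r) → λ² − ελ as r → 0⁺; that is, near the singularity the Dirac effective potentials behave as V± ≈ (λ² ∓ λ)/r². -/

import Mathlib

open Filter

/-- With `f(r) = 1 − √(2r)`, the Dirac effective potentials
`V±(r) = f λ²/r² ± λ f (√f/r)'` on the KS naked-singular spacetime satisfy
`r² V±(r) → λ² ∓ λ` as `r → 0⁺`, i.e. `V± ≈ (λ² ∓ λ)/r²` near the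
singularity. -/
theorem ks_dirac_potential_at_zero (lam ε : ℝ) (hε : ε = 1 ∨ ε = -1)
    (f : ℝ → ℝ) (hf : f = fun r : ℝ => 1 - Real.sqrt (2 * r))
    (V : ℝ → ℝ)
    (hV : V = fun r : ℝ =>
      f r * lam ^ 2 / r ^ 2
        + ε * lam * f r * deriv (fun s : ℝ => Real.sqrt (f s) / s) r) :
    Tendsto (fun r : ℝ => r ^ 2 * V r) (nhdsWithin 0 (Set.Ioo 0 (1 / 2)))
      (nhds (lam ^ 2 - ε * lam)) := by
  set h : ℝ → ℝ := fun r =>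
    (1 - Real.sqrt (2 * r)) * lam ^ 2
      + ε * lam * (1 - Real.sqrt (2 * r)) *
        (-(Real.sqrt r / Real.sqrt 2) / (2 * Real.sqrt (1 - Real.sqrt (2 * r)))
          - Real.sqrt (1 - Real.sqrt (2 * r))) with hh
  have hcont : ContinuousAt h 0 := by
    apply ContinuousAt.add
    · fun_prop
    · apply ContinuousAt.mul
      · fun_prop
      · apply ContinuousAt.sub
        · apply ContinuousAt.div
          · fun_prop
          · fun_prop
          · simp [Real.sqrt_zero]
        · fun_prop
  have h0 : h 0 = lam ^ 2 - ε * lam := by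
    simp [hh, Real.sqrt_zero, Real.sqrt_one]
    ring
  have htend : Tendsto h (nhdsWithin 0 (Set.Ioo 0 (1 / 2))) (nhds (lam ^ 2 - ε * lam)) := by
    rw [← h0]
    exact (hcont.tendsto).mono_left nhdsWithin_le_nhds
  refine htend.congr' ?_
  filter_upwards [self_mem_nhdsWithin] with r hr
  obtain ⟨hr0, hr2⟩ := hr
  have h2r : (0:ℝ) < 2 * r := by linarith
  have hsqlt : Real.sqrt (2 * r) < 1 := by
    rw [show (1:ℝ) = Real.sqrt 1 by simp]
    exact Real.sqrt_lt_sqrt (le_of_lt h2r) (by linarith)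
  have hfr : (0:ℝ) < 1 - Real.sqrt (2 * r) := by linarith
  have hfr' : f r = 1 - Real.sqrt (2 * r) := by rw [hf]
  have hsf : (0:ℝ) < Real.sqrt (1 - Real.sqrt (2 * r)) := Real.sqrt_pos.mpr hfr
  -- derivative computation
  have h1 : HasDerivAt (fun s : ℝ => 2 * s) 2 r := by
    simpa using (hasDerivAt_id r).const_mul (2:ℝ)
  have h2 : HasDerivAt (fun s : ℝ => Real.sqrt (2 * s))
      (1 / (2 * Real.sqrt (2 * r)) * 2) r :=
    (Real.hasDerivAt_sqrt (ne_of_gt h2r)).comp r h1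
  have h3 : HasDerivAt f (-(1 / (2 * Real.sqrt (2 * r)) * 2)) r := by
    rw [hf]; exact h2.const_sub 1
  have h4 : HasDerivAt (fun s : ℝ => Real.sqrt (f s))
      (1 / (2 * Real.sqrt (1 - Real.sqrt (2 * r))) *
        (-(1 / (2 * Real.sqrt (2 * r)) * 2))) r := by
    have := (Real.hasDerivAt_sqrt (x := f r) (by rw [hfr']; exact ne_of_gt hfr)).comp r h3
    rw [hfr'] at this
    exact this
  have h5 : HasDerivAt (fun s : ℝ => Real.sqrt (f s) / s)
      ((1 / (2 * Real.sqrt (1 - Real.sqrt (2 * r))) *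
        (-(1 / (2 * Real.sqrt (2 * r)) * 2)) * r - Real.sqrt (f r) * 1) / r ^ 2) r :=
    h4.div (hasDerivAt_id r) (ne_of_gt hr0)
  have hder := h5.deriv
  rw [hV, hh]
  simp only
  rw [hder, hfr']
  have hs2r : Real.sqrt (2 * r) = Real.sqrt 2 * Real.sqrt r := Real.sqrt_mul (by norm_num) r
  have hrr : Real.sqrt r * Real.sqrt r = r := Real.mul_self_sqrt hr0.le
  have hsr : (0:ℝ) < Real.sqrt r := Real.sqrt_pos.mpr hr0
  have hs2 : (0:ℝ) < Real.sqrt 2 := by positivity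
  rw [hs2r]
  field_simp
  ring_nf
  have key : r * (Real.sqrt r)⁻¹ = Real.sqrt r := by
    rw [← div_eq_mul_inv]; exact Real.div_sqrt
  linear_combination (Real.sqrt r * Real.sqrt 2 * lam * ε * (Real.sqrt (1 - Real.sqrt r * Real.sqrt 2))⁻¹ - lam * ε * (Real.sqrt (1 - Real.sqrt r * Real.sqrt 2))⁻¹) * hrr
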